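/- Let v: ℂ[G(3,n)] → ℂ be an algebra homomorphism with v(Δ^{i,i+1,i+2}) = 1 for all i (indices mod n). Writing Δ_k(i) := v(Δ at {i, i+1, i+k+2}) and Δ^k(i) := v(Δ at {i, i+k+1, i+k+2}), for 3 ≤ k < n−3 the recursion Δ_k(i) = Δ_1(i)·Δ_{k−1}(i+1) − Δ^1(i+1)·Δ_{k−2}(i+2) + Δ_{k−3}(i+3) holds. -/

import Mathlib

open Finset

/-- `(a,b,c)` is cyclically ordered in `Fin n`. -/
def Cyc {n : ℕ} (a b c : Fin n) : Prop :=
  (a < b ∧ b < c) ∨ (b < c ∧ c < a) ∨ (c < a ∧ a < b)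

/-- `a <_x b` iff `(x,a,b)` is cyclically ordered. -/
def Ltx {n : ℕ} (x a b : Fin n) : Prop := Cyc x a b

/-- `a ≤_x b`. -/
def Leqx {n : ℕ} (x a b : Fin n) : Prop := Ltx x a b ∨ a = b

/-- Two subsets `A`, `B` of `Fin n` are crossing. -/
def Crossing {n : ℕ} (A B : Finset (Fin n)) : Prop :=
  ∃ a ∈ A \ B, ∃ c ∈ A \ B, ∃ b ∈ B \ A, ∃ d ∈ B \ A, Cyc a b c ∧ Cyc b c d

/-- `F` is a maximal weakly separated family of triangles in `Fin n`. -/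
def MaxWS {n : ℕ} (F : Finset (Finset (Fin n))) : Prop :=
  (∀ t ∈ F, t.card = 3) ∧
  (∀ s ∈ F, ∀ t ∈ F, ¬ Crossing s t) ∧
  (∀ t : Finset (Fin n), t.card = 3 →
    (∀ s ∈ F, ¬ Crossing t s ∧ ¬ Crossing s t) → t ∈ F)

/-- The subfamily of triangles of `F` containing `x`. -/
def Fx {n : ℕ} (F : Finset (Finset (Fin n))) (x : Fin n) : Finset (Finset (Fin n)) :=
  F.filter (fun t => x ∈ t)

/-- Degree of `a` in the graph `G(F_x)`: the number of triangles of `F`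
containing both `x` and `a`. -/
def degx {n : ℕ} (F : Finset (Finset (Fin n))) (x a : Fin n) : ℕ :=
  ((Fx F x).filter (fun t => a ∈ t)).card

/-- `a` is a vertex of the graph `G(F_x)`. -/
def IsVertex {n : ℕ} (F : Finset (Finset (Fin n))) (x a : Fin n) : Prop :=
  a ≠ x ∧ 1 ≤ degx F x a

/-- `a` is a triangulation point of `G(F_x)`: a vertex of degree at least 2. -/
def IsTriPoint {n : ℕ} (F : Finset (Finset (Fin n))) (x a : Fin n) : Prop :=
  a ≠ x ∧ 2 ≤ degx F x a

/-- `a` is a leaf of `G(F_x)` attached to `b`. -/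
def IsLeafAt {n : ℕ} (F : Finset (Finset (Fin n))) (x a b : Fin n) : Prop :=
  a ≠ x ∧ degx F x a = 1 ∧ ({x, b, a} : Finset (Fin n)) ∈ F

/-- A graph with vertex set `V ⊆ Fin n` (in the induced cyclic order) and edge
set `E` is a triangulation of a polygon: equivalently (as noted in the paper),
`E` is a maximal family of pairwise non-crossing 2-subsets of `V`. -/
def IsPolygonTriangulation {n : ℕ} (V : Set (Fin n)) (E : Set (Finset (Fin n))) : Prop :=
  (∀ e ∈ E, e.card = 2 ∧ ↑e ⊆ V) ∧
  (∀ e ∈ E, ∀ f ∈ E, ¬ Crossing e f) ∧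
  (∀ e : Finset (Fin n), e.card = 2 → ↑e ⊆ V →
    (∀ f ∈ E, ¬ Crossing e f ∧ ¬ Crossing f e) → e ∈ E)

/-- The Plücker ideal: alternating relations together with the Plücker relations. -/
noncomputable def plueckerIdeal (n : ℕ) : Ideal (MvPolynomial (Fin 3 → Fin n) ℂ) :=
  Ideal.span { p | (∃ (f : Fin 3 → Fin n) (σ : Equiv.Perm (Fin 3)),
      p = MvPolynomial.X (f ∘ σ) - ((Equiv.Perm.sign σ : ℤˣ) : ℤ) • MvPolynomial.X f) ∨
    (∃ (g : Fin 2 → Fin n) (h : Fin 4 → Fin n),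
      p = ∑ l : Fin 4, (-1 : MvPolynomial (Fin 3 → Fin n) ℂ) ^ (l : ℕ) *
        MvPolynomial.X ![g 0, g 1, h l] * MvPolynomial.X (h ∘ l.succAbove)) }

/-- The homogeneous coordinate ring `ℂ[G(3,n)]` of the Grassmannian. -/
abbrev GrassRing (n : ℕ) := MvPolynomial (Fin 3 → Fin n) ℂ ⧸ plueckerIdeal n

/-- The Plücker coordinate `Δ^{ijk}`. -/
noncomputable def Pl {n : ℕ} (i j k : Fin n) : GrassRing n :=
  Ideal.Quotient.mk _ (MvPolynomial.X ![i, j, k])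

/-- Median of three elements of `Fin n`. -/
def mid3 {n : ℕ} (i j k : Fin n) : Fin n := max (min i j) (min (max i j) k)

/-- The Plücker coordinate `Δ^{o(i,j,k)}` with the indices ordered increasingly. -/
noncomputable def Plo {n : ℕ} (i j k : Fin n) : GrassRing n :=
  Pl (min i (min j k)) (mid3 i j k) (max i (max j k))

/-- `Δ_k(i) = v(Δ at {i, i+1, i+k+2})`. -/
noncomputable def Dlow {n : ℕ} [NeZero n] (v : GrassRing n →ₐ[ℂ] ℂ) (k : ℕ) (i : Fin n) : ℂ :=
  v (Plo i (i + 1) (i + (Fin.ofNat n (k + 2))))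

/-- `Δ^k(i) = v(Δ at {i, i+k+1, i+k+2})`. -/
noncomputable def Dup {n : ℕ} [NeZero n] (v : GrassRing n →ₐ[ℂ] ℂ) (k : ℕ) (i : Fin n) : ℂ :=
  v (Plo i (i + (Fin.ofNat n (k + 1))) (i + (Fin.ofNat n (k + 2))))


section AuxLR
variable {n : ℕ}
open Fin.NatCast

private lemma auxLR_swap_gen (f : Fin 3 → Fin n) (p q : Fin 3) (hpq : p ≠ q) :
    Ideal.Quotient.mk (plueckerIdeal n) (MvPolynomial.X (f ∘ Equiv.swap p q)) =
      - Ideal.Quotient.mk (plueckerIdeal n) (MvPolynomial.X f) := by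
  have h : (MvPolynomial.X (f ∘ (Equiv.swap p q)) -
      ((Equiv.Perm.sign (Equiv.swap p q) : ℤˣ) : ℤ) • MvPolynomial.X f) ∈ plueckerIdeal n :=
    Ideal.subset_span (Or.inl ⟨f, Equiv.swap p q, rfl⟩)
  rw [Equiv.Perm.sign_swap hpq] at h
  simp only [Units.val_neg, Units.val_one, neg_smul, one_smul, sub_neg_eq_add] at h
  have h2 := (Ideal.Quotient.eq_zero_iff_mem).2 h
  rw [map_add] at h2
  linear_combination h2

private lemma auxLR_pl_swap12 (a b c : Fin n) : Pl a c b = - Pl a b c := by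
  have h := auxLR_swap_gen ![a,b,c] 1 2 (by decide)
  have h2 : ((![a,b,c]) ∘ (Equiv.swap (1:Fin 3) 2)) = ![a,c,b] := by
    funext j; fin_cases j <;> simp [Equiv.swap_apply_def]
  rwa [h2] at h

private lemma auxLR_pl_swap01 (a b c : Fin n) : Pl b a c = - Pl a b c := by
  have h := auxLR_swap_gen ![a,b,c] 0 1 (by decide)
  have h2 : ((![a,b,c]) ∘ (Equiv.swap (0:Fin 3) 1)) = ![b,a,c] := by
    funext j; fin_cases j <;> simp [Equiv.swap_apply_def]
  rwa [h2] at h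

private lemma auxLR_pl_cyc (a b c : Fin n) : Pl b c a = Pl a b c := by
  rw [show Pl b c a = - Pl b a c from auxLR_pl_swap12 b a c, auxLR_pl_swap01 a b c]; ring

private lemma auxLR_pl_rel (p z a b c : Fin n) :
    Pl p z z * Pl a b c - Pl p z a * Pl z b c + Pl p z b * Pl z a c - Pl p z c * Pl z a b = 0 := by
  have h : (∑ l : Fin 4, (-1 : MvPolynomial (Fin 3 → Fin n) ℂ) ^ (l : ℕ) *
        MvPolynomial.X ![(![p,z]) 0, (![p,z]) 1, (![z,a,b,c]) l] *
        MvPolynomial.X ((![z,a,b,c]) ∘ l.succAbove)) ∈ plueckerIdeal n :=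
    Ideal.subset_span (Or.inr ⟨![p,z], ![z,a,b,c], rfl⟩)
  have e0 : ((![z,a,b,c]) ∘ (0:Fin 4).succAbove) = ![a,b,c] := by
    funext j; fin_cases j <;> rfl
  have e1 : ((![z,a,b,c]) ∘ (1:Fin 4).succAbove) = ![z,b,c] := by
    funext j; fin_cases j <;> rfl
  have e2 : ((![z,a,b,c]) ∘ (2:Fin 4).succAbove) = ![z,a,c] := by
    funext j; fin_cases j <;> rfl
  have e3 : ((![z,a,b,c]) ∘ (3:Fin 4).succAbove) = ![z,a,b] := by
    funext j; fin_cases j <;> rfl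
  rw [Fin.sum_univ_four] at h
  have v0 : (((0:Fin 4)):ℕ) = 0 := rfl
  have v1 : (((1:Fin 4)):ℕ) = 1 := rfl
  have v2 : (((2:Fin 4)):ℕ) = 2 := rfl
  have v3 : (((3:Fin 4)):ℕ) = 3 := rfl
  simp only [e0, e1, e2, e3, v0, v1, v2, v3] at h
  norm_num [show (![z,a,b,c] : Fin 4 → Fin n) 2 = b from rfl,
    show (![z,a,b,c] : Fin 4 → Fin n) 3 = c from rfl] at h
  have h2 := (Ideal.Quotient.eq_zero_iff_mem).2 h
  simp only [map_add, map_sub, map_mul, map_neg, map_pow] at h2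
  unfold Pl
  linear_combination h2

private lemma auxLR_plo_eq {a b c : Fin n}
    (h : (a < b ∧ b < c) ∨ (b < c ∧ c < a) ∨ (c < a ∧ a < b)) : Plo a b c = Pl a b c := by
  rcases h with ⟨h1, h2⟩ | ⟨h1, h2⟩ | ⟨h1, h2⟩
  · have h3 := h1.trans h2
    simp [Plo, mid3, min_def, max_def, h1.le, h2.le, h3.le, h1.not_ge, h2.not_ge, h3.not_ge]
  · have h3 := h1.trans h2
    rw [show Pl a b c = Pl b c a from (auxLR_pl_cyc a b c).symm]
    simp [Plo, mid3, min_def, max_def, h1.le, h2.le, h3.le, h1.not_ge, h2.not_ge, h3.not_ge]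
  · have h3 := h1.trans h2
    rw [show Pl a b c = Pl c a b from auxLR_pl_cyc c a b]
    simp [Plo, mid3, min_def, max_def, h1.le, h2.le, h3.le, h1.not_ge, h2.not_ge, h3.not_ge]

private lemma auxLR_cyc3 [NeZero n] (i : Fin n) {s t u : ℕ} (hst : s < t) (htu : t < u)
    (hu : u < n) :
    (i + (s:Fin n) < i + (t:Fin n) ∧ i + (t:Fin n) < i + (u:Fin n)) ∨
    (i + (t:Fin n) < i + (u:Fin n) ∧ i + (u:Fin n) < i + (s:Fin n)) ∨
    (i + (u:Fin n) < i + (s:Fin n) ∧ i + (s:Fin n) < i + (t:Fin n)) := by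
  have hn : 0 < n := Nat.pos_of_ne_zero (NeZero.ne n)
  have hi := i.isLt
  simp only [Fin.lt_def, Fin.add_def, Fin.val_natCast]
  rw [Nat.mod_eq_of_lt (show s < n by omega), Nat.mod_eq_of_lt (show t < n by omega),
    Nat.mod_eq_of_lt hu]
  have m : ∀ x : ℕ, x < n →
      (i.val + x) % n = if i.val + x < n then i.val + x else i.val + x - n := by
    intro x hx
    split
    · exact Nat.mod_eq_of_lt ‹_›
    · rw [Nat.mod_eq_sub_mod (by omega), Nat.mod_eq_of_lt (by omega)]
  rw [m s (by omega), m t (by omega), m u hu]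
  split_ifs <;> omega

end AuxLR

/-- Recursion for the `Δ_k(i)`. -/
theorem low_recursion {n : ℕ} [NeZero n] (v : GrassRing n →ₐ[ℂ] ℂ)
    (h1 : ∀ i : Fin n, v (Plo i (i + 1) (i + 2)) = 1)
    (k : ℕ) (hk : 3 ≤ k) (hk' : k < n - 3) (i : Fin n) :
    Dlow v k i = Dlow v 1 i * Dlow v (k - 1) (i + 1)
      - Dup v 1 (i + 1) * Dlow v (k - 2) (i + 2)
      + Dlow v (k - 3) (i + 3) := by
  open Fin.NatCast in
  obtain ⟨k', rfl⟩ : ∃ k', k = k' + 3 := ⟨k - 3, by omega⟩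
  have hn7 : k' + 7 ≤ n := by omega
  unfold Dlow Dup
  simp only [Fin.ofNat_eq_cast]
  have hadd : ∀ (s t : ℕ), (i + (s:Fin n)) + ((t:ℕ):Fin n) = i + ((s+t : ℕ):Fin n) := by
    intro s t; rw [add_assoc, ← Nat.cast_add]
  have c1 : (1 : Fin n) = ((1:ℕ) : Fin n) := by norm_cast
  have c2 : (2 : Fin n) = ((2:ℕ) : Fin n) := by norm_cast
  have c3 : (3 : Fin n) = ((3:ℕ) : Fin n) := by norm_cast
  have n1 : k' + 3 - 1 + 2 = k' + 4 := by omega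
  have n2 : k' + 3 - 2 + 2 = k' + 3 := by omega
  have n3 : k' + 3 - 3 + 2 = k' + 2 := by omega
  have n4 : k' + 3 + 2 = k' + 5 := by omega
  have n5 : 1 + (k' + 4) = k' + 5 := by omega
  have n6 : 2 + (k' + 3) = k' + 5 := by omega
  have n7 : 3 + (k' + 2) = k' + 5 := by omega
  simp only [n1, n2, n3, n4, c1, c2, c3, hadd, n5, n6, n7, Nat.reduceAdd]
  have key : ∀ (s t u : ℕ), s < t → t < u → u < n →
      Plo (i+(s:Fin n)) (i+(t:Fin n)) (i+(u:Fin n)) =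
      Pl (i+(s:Fin n)) (i+(t:Fin n)) (i+(u:Fin n)) :=
    fun s t u h h' h'' => auxLR_plo_eq (auxLR_cyc3 i h h' h'')
  have key0 : ∀ (t u : ℕ), 0 < t → t < u → u < n →
      Plo i (i+(t:Fin n)) (i+(u:Fin n)) = Pl i (i+(t:Fin n)) (i+(u:Fin n)) := by
    intro t u h h' h''
    have h2 := key 0 t u h h' h''
    simpa using h2
  have hdiag : ∀ p z : Fin n, v (Pl p z z) = 0 := by
    intro p z
    have h := congrArg v (auxLR_pl_swap12 p z z)
    rw [map_neg] at h
    linear_combination h / 2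
  have mkN : ∀ s t u : ℕ, t = s + 1 → u = s + 2 → u < n →
      v (Pl (i+(s:Fin n)) (i+(t:Fin n)) (i+(u:Fin n))) = 1 := by
    intro s t u ht hu hun
    subst ht hu
    have h := h1 (i + (s:Fin n))
    rw [c1, c2, hadd, hadd, key s (s+1) (s+2) (by omega) (by omega) hun] at h
    exact h
  have N0 : v (Pl i (i+((1:ℕ):Fin n)) (i+((2:ℕ):Fin n))) = 1 := by
    have h := h1 i
    rwa [c1, c2, key0 1 2 (by omega) (by omega) (by omega)] at h
  have N1 := mkN 1 2 3 (by norm_num) (by norm_num) (by omega)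
  have N2 := mkN 2 3 4 (by norm_num) (by norm_num) (by omega)
  have R1 := congrArg v (auxLR_pl_rel i (i+((1:ℕ):Fin n)) (i+((2:ℕ):Fin n)) (i+((3:ℕ):Fin n))
    (i+((k'+5:ℕ):Fin n)))
  have hR2 := auxLR_pl_rel (i+((1:ℕ):Fin n)) (i+((3:ℕ):Fin n)) (i+((k'+5:ℕ):Fin n))
    (i+((4:ℕ):Fin n)) (i+((2:ℕ):Fin n))
  rw [show Pl (i+((3:ℕ):Fin n)) (i+((4:ℕ):Fin n)) (i+((2:ℕ):Fin n)) =
        Pl (i+((2:ℕ):Fin n)) (i+((3:ℕ):Fin n)) (i+((4:ℕ):Fin n)) from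
      auxLR_pl_cyc _ _ _,
    show Pl (i+((3:ℕ):Fin n)) (i+((k'+5:ℕ):Fin n)) (i+((2:ℕ):Fin n)) =
        Pl (i+((2:ℕ):Fin n)) (i+((3:ℕ):Fin n)) (i+((k'+5:ℕ):Fin n)) from
      auxLR_pl_cyc _ _ _,
    show Pl (i+((1:ℕ):Fin n)) (i+((3:ℕ):Fin n)) (i+((2:ℕ):Fin n)) =
        - Pl (i+((1:ℕ):Fin n)) (i+((2:ℕ):Fin n)) (i+((3:ℕ):Fin n)) from
      auxLR_pl_swap12 _ _ _,
    show Pl (i+((3:ℕ):Fin n)) (i+((k'+5:ℕ):Fin n)) (i+((4:ℕ):Fin n)) =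
        - Pl (i+((3:ℕ):Fin n)) (i+((4:ℕ):Fin n)) (i+((k'+5:ℕ):Fin n)) from
      auxLR_pl_swap12 _ _ _] at hR2
  have R2 := congrArg v hR2
  simp only [map_sub, map_add, map_mul, map_neg, map_zero] at R1 R2
  simp only [hdiag, zero_mul] at R1 R2
  rw [key0 1 (k'+5) (by omega) (by omega) (by omega),
    key0 1 3 (by omega) (by omega) (by omega),
    key 1 2 (k'+5) (by omega) (by omega) (by omega),
    key 1 3 4 (by omega) (by omega) (by omega),
    key 2 3 (k'+5) (by omega) (by omega) (by omega),
    key 3 4 (k'+5) (by omega) (by omega) (by omega)]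
  simp only [N0, N1, N2, mul_one, one_mul] at R1 R2
  linear_combination R2 - R1
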